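/- Every v ∈ D with v ≤ g(v) componentwise satisfies v ≤ v^max componentwise, where v^max := 1_n + 2·L_red⁻¹ q. -/

import Mathlib

open Finset Matrix

noncomputable section

/-- Extension of a voltage vector `v ∈ ℝⁿ` to all buses `{0,1,…,n}`,
with the slack-bus convention `v₀ = 1`. -/
def extV {n : ℕ} (v : Fin n → ℝ) : Fin (n + 1) → ℝ := Fin.cons (1 : ℝ) v

/-- The domain `D = {v ∈ ℝⁿ : vᵢ > 0 ∀ i, vᵢ vₖ ≥ sᵢₖ² on every edge}` (with `v₀ = 1`). -/
def memD {n : ℕ} (B : Matrix (Fin (n + 1)) (Fin (n + 1)) ℝ)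
    (s : Fin (n + 1) → Fin (n + 1) → ℝ) (v : Fin n → ℝ) : Prop :=
  (∀ i, 0 < v i) ∧ ∀ i k, 0 < B i k → s i k ^ 2 ≤ extV v i * extV v k

/-- The fixed-point map `g` with
`gᵢ(v) = qᵢ/𝐁ᵢ + Σ_{k ∈ N(i)} (Bᵢₖ/𝐁ᵢ)·√(vᵢvₖ − sᵢₖ²)`. -/
def gmap {n : ℕ} (B : Matrix (Fin (n + 1)) (Fin (n + 1)) ℝ)
    (s : Fin (n + 1) → Fin (n + 1) → ℝ) (q : Fin n → ℝ) (v : Fin n → ℝ) :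
    Fin n → ℝ := fun i =>
  q i / (∑ k, B i.succ k) +
    ∑ k ∈ Finset.univ.filter (fun k => 0 < B i.succ k),
      (B i.succ k / (∑ k', B i.succ k')) *
        Real.sqrt (extV v i.succ * extV v k - s i.succ k ^ 2)

/-- The reduced Laplacian `L_red` (Laplacian of the weighted graph with the
row and column of vertex `0` deleted). -/
def Lred {n : ℕ} (B : Matrix (Fin (n + 1)) (Fin (n + 1)) ℝ) :
    Matrix (Fin n) (Fin n) ℝ := fun i k =>
  if i = k then ∑ j, B i.succ j else -B i.succ k.succ

/-- `v^max := 1ₙ + 2·L_red⁻¹ q`. -/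
def vmax {n : ℕ} (B : Matrix (Fin (n + 1)) (Fin (n + 1)) ℝ) (q : Fin n → ℝ) :
    Fin n → ℝ := fun i => 1 + 2 * ((Lred B)⁻¹ *ᵥ q) i

/-- Expansion of a row of `Lred *ᵥ x`. -/
lemma lred_apply {n : ℕ} (B : Matrix (Fin (n + 1)) (Fin (n + 1)) ℝ)
    (hBdiag : ∀ i, B i i = 0) (x : Fin n → ℝ) (i : Fin n) :
    (Lred B *ᵥ x) i = (∑ j, B i.succ j) * x i - ∑ k, B i.succ k.succ * x k := by
  have hentry : ∀ k, Lred B i k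
      = (if i = k then (∑ j, B i.succ j) else 0) - B i.succ k.succ := by
    intro k
    by_cases h : i = k
    · subst h; simp [Lred, hBdiag]
    · simp [Lred, h]
  simp only [Matrix.mulVec, dotProduct]
  calc ∑ k, Lred B i k * x k
      = ∑ k, (((if i = k then (∑ j, B i.succ j) else 0)) * x k - B i.succ k.succ * x k) := by
        refine Finset.sum_congr rfl fun k _ => ?_
        rw [hentry k, sub_mul]
    _ = (∑ j, B i.succ j) * x i - ∑ k, B i.succ k.succ * x k := by
        rw [Finset.sum_sub_distrib]
        congr 1
        simp

/-- Key inverse-positivity property of the reduced Laplacian of a connected graph. -/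
lemma lred_inv_pos {n : ℕ} (hn : 1 ≤ n)
    (B : Matrix (Fin (n + 1)) (Fin (n + 1)) ℝ)
    (hBdiag : ∀ i, B i i = 0) (hBnonneg : ∀ i k, 0 ≤ B i k)
    (G : SimpleGraph (Fin (n + 1)))
    (hGadj : ∀ i k, G.Adj i k ↔ 0 < B i k)
    (hGconn : G.Connected)
    (x : Fin n → ℝ) (hx : ∀ i, 0 ≤ (Lred B *ᵥ x) i) : ∀ i, 0 ≤ x i := by
  by_contra hcon
  push_neg at hcon
  obtain ⟨j0, hj0⟩ := hcon
  haveI : Nonempty (Fin n) := ⟨⟨0, hn⟩⟩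
  obtain ⟨i0, -, hmin⟩ := Finset.exists_min_image Finset.univ x Finset.univ_nonempty
  set m := x i0 with hm
  have hmneg : m < 0 := lt_of_le_of_lt (hmin j0 (Finset.mem_univ _)) hj0
  have hloc : ∀ i : Fin n, x i = m →
      B i.succ 0 = 0 ∧ ∀ k : Fin n, 0 < B i.succ k.succ → x k = m := by
    intro i hi
    have hmv := hx i
    rw [lred_apply B hBdiag x i] at hmv
    have hexp : (∑ j, B i.succ j) * x i - ∑ k, B i.succ k.succ * x k
        = B i.succ 0 * x i + ∑ k, B i.succ k.succ * (x i - x k) := by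
      rw [Fin.sum_univ_succ (f := fun j => B i.succ j)]
      rw [Finset.sum_congr rfl (fun k _ => mul_sub (B i.succ k.succ) (x i) (x k)),
        Finset.sum_sub_distrib, ← Finset.sum_mul]
      ring
    rw [hexp] at hmv
    have hterm : ∀ k : Fin n, B i.succ k.succ * (x i - x k) ≤ 0 := by
      intro k
      have : x i - x k ≤ 0 := by
        have := hmin k (Finset.mem_univ _)
        rw [hi]; linarith
      exact mul_nonpos_of_nonneg_of_nonpos (hBnonneg _ _) this
    have hsum_nonpos : ∑ k, B i.succ k.succ * (x i - x k) ≤ 0 :=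
      Finset.sum_nonpos fun k _ => hterm k
    have hB0 : B i.succ 0 * x i ≤ 0 := by
      rw [hi]
      exact mul_nonpos_of_nonneg_of_nonpos (hBnonneg _ _) hmneg.le
    have hB0' : B i.succ 0 * x i = 0 := by linarith
    have hsum0 : ∑ k, B i.succ k.succ * (x i - x k) = 0 := by linarith
    constructor
    · rcases mul_eq_zero.1 hB0' with h | h
      · exact h
      · rw [hi] at h; exact absurd h hmneg.ne
    · intro k hk
      have := (Finset.sum_eq_zero_iff_of_nonpos (fun k _ => hterm k)).1 hsum0 k
        (Finset.mem_univ _)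
      rcases mul_eq_zero.1 this with h | h
      · exact absurd h hk.ne'
      · rw [hi] at h; linarith
  have hprop : ∀ (a : Fin (n + 1)), (∃ i, a = i.succ ∧ x i = m) →
      ∀ b, G.Adj a b → (∃ i, b = i.succ ∧ x i = m) := by
    rintro a ⟨i, rfl, hi⟩ b hadj
    obtain ⟨h0, hk⟩ := hloc i hi
    rcases Fin.eq_zero_or_eq_succ b with rfl | ⟨k, rfl⟩
    · have := (hGadj _ _).1 hadj
      rw [h0] at this
      exact absurd this (lt_irrefl 0)
    · exact ⟨k, rfl, hk k ((hGadj _ _).1 hadj)⟩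
  have hwalk : ∀ (a b : Fin (n + 1)) (_ : G.Walk a b),
      (∃ i, a = i.succ ∧ x i = m) → (∃ i, b = i.succ ∧ x i = m) := by
    intro a b p
    induction p with
    | nil => exact id
    | cons h p ih => exact fun ha => ih (hprop _ ha _ h)
  obtain ⟨p⟩ := hGconn.preconnected i0.succ 0
  obtain ⟨i, hi, -⟩ := hwalk _ _ p ⟨i0, rfl, rfl⟩
  exact Fin.succ_ne_zero i hi.symm

lemma lred_det_ne_zero {n : ℕ} (hn : 1 ≤ n)
    (B : Matrix (Fin (n + 1)) (Fin (n + 1)) ℝ)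
    (hBdiag : ∀ i, B i i = 0) (hBnonneg : ∀ i k, 0 ≤ B i k)
    (G : SimpleGraph (Fin (n + 1)))
    (hGadj : ∀ i k, G.Adj i k ↔ 0 < B i k)
    (hGconn : G.Connected) : (Lred B).det ≠ 0 := by
  intro hdet
  rw [← Matrix.exists_mulVec_eq_zero_iff] at hdet
  obtain ⟨y, hy0, hy⟩ := hdet
  have h1 := lred_inv_pos hn B hBdiag hBnonneg G hGadj hGconn y
    (fun i => by rw [hy]; exact le_refl 0)
  have h2 := lred_inv_pos hn B hBdiag hBnonneg G hGadj hGconn (-y)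
    (fun i => by rw [Matrix.mulVec_neg, hy]; simp)
  apply hy0
  funext i
  have := h2 i
  simp only [Pi.neg_apply, Pi.zero_apply] at this ⊢
  linarith [h1 i]

theorem stmt1 {n : ℕ} (hn : 1 ≤ n)
    (B : Matrix (Fin (n + 1)) (Fin (n + 1)) ℝ)
    (hBsymm : ∀ i k, B i k = B k i)
    (hBdiag : ∀ i, B i i = 0)
    (hBnonneg : ∀ i k, 0 ≤ B i k)
    (G : SimpleGraph (Fin (n + 1)))
    (hGadj : ∀ i k, G.Adj i k ↔ 0 < B i k)
    (hGtree : G.IsTree)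
    (q : Fin n → ℝ)
    (s : Fin (n + 1) → Fin (n + 1) → ℝ)
    (hssymm : ∀ i k, s i k = s k i)
    (v : Fin n → ℝ) (hv : memD B s v)
    (hvg : ∀ i, v i ≤ gmap B s q v i) :
    ∀ i, v i ≤ vmax B q i := by
  have hconn : G.Connected := hGtree.isConnected
  -- positivity of the extended voltage
  have hext : ∀ j : Fin (n + 1), 0 < extV v j := by
    intro j
    rcases Fin.eq_zero_or_eq_succ j with rfl | ⟨k, rfl⟩
    · simp [extV]
    · simpa [extV] using hv.1 k
  -- row sums are positive
  have hσ : ∀ i : Fin n, 0 < ∑ k, B i.succ k := by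
    intro i
    obtain ⟨p⟩ := hconn.preconnected i.succ 0
    have hne : i.succ ≠ (0 : Fin (n + 1)) := Fin.succ_ne_zero i
    obtain ⟨b, hadj, -, -⟩ := SimpleGraph.Walk.not_nil_iff.1
      (SimpleGraph.Walk.not_nil_of_ne hne (p := p))
    have hpos : 0 < B i.succ b := (hGadj _ _).1 hadj
    have hle : B i.succ b ≤ ∑ k, B i.succ k :=
      Finset.single_le_sum (fun k _ => hBnonneg i.succ k) (Finset.mem_univ b)
    linarith
  -- AM-GM bound on the square roots
  have hsqrt : ∀ (a b c : ℝ), 0 ≤ a → 0 ≤ b →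
      Real.sqrt (a * b - c ^ 2) ≤ (a + b) / 2 := by
    intro a b c ha hb
    have h1 : Real.sqrt (a * b - c ^ 2) ≤ Real.sqrt (a * b) :=
      Real.sqrt_le_sqrt (by nlinarith [sq_nonneg c])
    have h2 : Real.sqrt (a * b) ≤ (a + b) / 2 := by
      nlinarith [Real.sq_sqrt (mul_nonneg ha hb), Real.sqrt_nonneg (a * b),
        sq_nonneg (a - b)]
    linarith
  -- main per-row inequality
  have key_ineq : ∀ i : Fin n,
      (∑ k, B i.succ k) * v i - ∑ k, B i.succ k * extV v k ≤ 2 * q i := by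
    intro i
    set σ := ∑ k, B i.succ k with hσdef
    have hσi := hσ i
    have h1 := hvg i
    unfold gmap at h1
    rw [← hσdef] at h1
    -- bound the filtered sum
    have hb1 : ∑ k ∈ Finset.univ.filter (fun k => 0 < B i.succ k),
        (B i.succ k / σ) * Real.sqrt (extV v i.succ * extV v k - s i.succ k ^ 2)
        ≤ ∑ k ∈ Finset.univ.filter (fun k => 0 < B i.succ k),
        (B i.succ k / σ) * ((extV v i.succ + extV v k) / 2) := by
      refine Finset.sum_le_sum fun k _ => ?_
      exact mul_le_mul_of_nonneg_left
        (hsqrt _ _ _ (hext i.succ).le (hext k).le)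
        (div_nonneg (hBnonneg _ _) hσi.le)
    have hb2 : ∑ k ∈ Finset.univ.filter (fun k => 0 < B i.succ k),
        (B i.succ k / σ) * ((extV v i.succ + extV v k) / 2)
        = ∑ k, (B i.succ k / σ) * ((extV v i.succ + extV v k) / 2) := by
      refine Finset.sum_subset (Finset.filter_subset _ _) fun k _ hk => ?_
      have : B i.succ k = 0 := by
        simp only [Finset.mem_filter, Finset.mem_univ, true_and, not_lt] at hk
        exact le_antisymm hk (hBnonneg _ _)
      simp [this]
    have h2 : v i ≤ q i / σ + ∑ k, (B i.succ k / σ) * ((extV v i.succ + extV v k) / 2) := by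
      calc v i ≤ _ := h1
        _ ≤ q i / σ + ∑ k ∈ Finset.univ.filter (fun k => 0 < B i.succ k),
            (B i.succ k / σ) * ((extV v i.succ + extV v k) / 2) := by
              exact add_le_add_right hb1 _
        _ = _ := by rw [hb2]
    have hsum : ∑ k, (B i.succ k / σ) * ((extV v i.succ + extV v k) / 2)
        = (σ * extV v i.succ + ∑ k, B i.succ k * extV v k) / (2 * σ) := by
      rw [Finset.sum_congr rfl (fun k _ => by
        field_simp : ∀ k ∈ Finset.univ, (B i.succ k / σ) * ((extV v i.succ + extV v k) / 2)
          = (B i.succ k * extV v i.succ + B i.succ k * extV v k) / (2 * σ)),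
        ← Finset.sum_div, Finset.sum_add_distrib, ← Finset.sum_mul]
    rw [hsum] at h2
    have hvi : extV v i.succ = v i := by simp [extV]
    rw [hvi] at h2
    rw [div_add_div _ _ (ne_of_gt hσi) (by positivity : (2 : ℝ) * σ ≠ 0),
      le_div_iff₀ (by positivity)] at h2
    nlinarith [h2]
  -- translate into the reduced Laplacian inequality
  set w : Fin n → ℝ := fun k => v k - 1 with hw
  have hLw : ∀ i, (Lred B *ᵥ w) i ≤ 2 * q i := by
    intro i
    rw [lred_apply B hBdiag w i]
    have hsplit : ∑ k, B i.succ k * extV v k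
        = B i.succ 0 + ∑ k, B i.succ k.succ * v k := by
      rw [Fin.sum_univ_succ (f := fun k => B i.succ k * extV v k)]
      simp [extV]
    have hσsplit : ∑ j, B i.succ j = B i.succ 0 + ∑ k : Fin n, B i.succ k.succ := by
      rw [Fin.sum_univ_succ (f := fun j => B i.succ j)]
    have hwsum : ∑ k, B i.succ k.succ * w k
        = (∑ k, B i.succ k.succ * v k) - ∑ k : Fin n, B i.succ k.succ := by
      rw [← Finset.sum_sub_distrib]
      exact Finset.sum_congr rfl fun (k : Fin n) _ => by simp [hw]; ring
    have hki := key_ineq i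
    rw [hsplit, hσsplit] at hki
    rw [hwsum, hσsplit]
    simp only [hw]
    nlinarith [hki]
  -- invert the Laplacian
  have hdet := lred_det_ne_zero hn B hBdiag hBnonneg G hGadj hconn
  have hunit : IsUnit (Lred B).det := isUnit_iff_ne_zero.mpr hdet
  set x : Fin n → ℝ := fun k => 2 * ((Lred B)⁻¹ *ᵥ q) k - w k with hx
  have hLx : ∀ i, 0 ≤ (Lred B *ᵥ x) i := by
    intro i
    have hxeq : x = (2 : ℝ) • ((Lred B)⁻¹ *ᵥ q) - w := by
      funext k; simp [hx]
    rw [hxeq, Matrix.mulVec_sub, Matrix.mulVec_smul, Matrix.mulVec_mulVec,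
      Matrix.mul_nonsing_inv _ hunit, Matrix.one_mulVec]
    have := hLw i
    simp only [Pi.sub_apply, Pi.smul_apply, smul_eq_mul]
    linarith
  have hxpos := lred_inv_pos hn B hBdiag hBnonneg G hGadj hconn x hLx
  intro i
  have := hxpos i
  simp only [hx, hw] at this
  unfold vmax
  linarith
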